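/- Let L: ℝⁿ → ℝ be convex and differentiable, H positive semidefinite, w ∈ ℝⁿ, d a minimizer of d ↦ ∇L(w)ᵀd + (1/2)dᵀHd + ‖w+d‖₁, and γ ∈ [0,1). Define Δ = ∇L(w)ᵀd + γ dᵀHd + ‖w+d‖₁ − ‖w‖₁. Then Δ ≤ (γ−1) dᵀHd ≤ 0. -/

import Mathlib

open RealInnerProductSpace

/-- with `d` minimizing `d ↦ ∇L(w)ᵀd + (1/2)dᵀHd + ‖w+d‖₁`,
`γ ∈ [0,1)` and `Δ = ∇L(w)ᵀd + γ dᵀHd + ‖w+d‖₁ − ‖w‖₁`, one has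
`Δ ≤ (γ−1) dᵀHd ≤ 0`. -/
theorem armijo_delta_upper_bound (n : ℕ)
    (L : EuclideanSpace ℝ (Fin n) → ℝ)
    (hconv : ConvexOn ℝ Set.univ L) (hdiff : Differentiable ℝ L)
    (w g d : EuclideanSpace ℝ (Fin n)) (hg : HasGradientAt L g w)
    (H : EuclideanSpace ℝ (Fin n) →L[ℝ] EuclideanSpace ℝ (Fin n))
    (hHsymm : ∀ u v, ⟪H u, v⟫ = ⟪u, H v⟫)
    (hHpsd : ∀ v, 0 ≤ ⟪v, H v⟫)
    (hmin : ∀ d' : EuclideanSpace ℝ (Fin n),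
      ⟪g, d⟫ + (1 / 2) * ⟪d, H d⟫ + ∑ j, |w j + d j| ≤
      ⟪g, d'⟫ + (1 / 2) * ⟪d', H d'⟫ + ∑ j, |w j + d' j|)
    (γ : ℝ) (hγ0 : 0 ≤ γ) (hγ1 : γ < 1)
    (Δ : ℝ)
    (hΔ : Δ = ⟪g, d⟫ + γ * ⟪d, H d⟫ + (∑ j, |w j + d j|) - ∑ j, |w j|) :
    Δ ≤ (γ - 1) * ⟪d, H d⟫ ∧ (γ - 1) * ⟪d, H d⟫ ≤ 0 := by
  set Q : ℝ := ⟪d, H d⟫ with hQ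
  have hQ0 : 0 ≤ Q := hHpsd d
  set S1 : ℝ := ∑ j, |w j + d j| with hS1
  set S0 : ℝ := ∑ j, |w j| with hS0
  -- key: for every λ ∈ (0,1), A ≤ -Q + (1-λ)/2 * Q
  have key : ∀ l : ℝ, 0 < l → l < 1 →
      ⟪g, d⟫ + S1 - S0 ≤ -Q + (1 - l) / 2 * Q := by
    intro l hl0 hl1
    have hmin' := hmin (l • d)
    have h1 : ⟪g, l • d⟫ = l * ⟪g, d⟫ := real_inner_smul_right g d l
    have h2 : ⟪l • d, H (l • d)⟫ = l * l * Q := by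
      rw [map_smul, real_inner_smul_left, real_inner_smul_right, hQ]; ring
    have h3 : (∑ j, |w j + (l • d) j|) ≤ l * S1 + (1 - l) * S0 := by
      rw [hS1, hS0, Finset.mul_sum, Finset.mul_sum, ← Finset.sum_add_distrib]
      apply Finset.sum_le_sum
      intro j _
      have : w j + (l • d) j = l * (w j + d j) + (1 - l) * (w j) := by
        simp [PiLp.smul_apply, smul_eq_mul]; ring
      rw [this]
      have habs := abs_add_le (l * (w j + d j)) ((1 - l) * w j)
      rw [abs_mul, abs_mul, abs_of_pos hl0,
        abs_of_pos (show (0:ℝ) < 1 - l by linarith)] at habs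
      exact habs
    rw [h1, h2] at hmin'
    have hmain : ⟪g, d⟫ + (1 / 2) * Q + S1 ≤
        l * ⟪g, d⟫ + (1 / 2) * (l * l * Q) + (l * S1 + (1 - l) * S0) := by
      calc ⟪g, d⟫ + (1 / 2) * Q + S1 ≤ _ := hmin'
        _ ≤ _ := by linarith
    -- rearrange: (1-l)(⟪g,d⟫ + S1 - S0) ≤ (1/2)(l²-1) Q
    have h4 : (1 - l) * (⟪g, d⟫ + S1 - S0) ≤ (1 - l) * (-Q + (1 - l) / 2 * Q) := by
      nlinarith [hmain]
    have := (mul_le_mul_iff_right₀ (by linarith : (0:ℝ) < 1 - l)).mp h4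
    linarith
  have hA : ⟪g, d⟫ + S1 - S0 ≤ -Q := by
    refine le_of_forall_pos_le_add ?_
    intro ε hε
    set l : ℝ := max (1/2) (1 - ε / (Q + 1)) with hl
    have hl0 : 0 < l := lt_max_of_lt_left (by norm_num)
    have hl1 : l < 1 := by
      apply max_lt (by norm_num)
      have : 0 < ε / (Q + 1) := div_pos hε (by linarith)
      linarith
    have h := key l hl0 hl1
    have hle : (1 - l) / 2 * Q ≤ ε := by
      have h1l : 1 - l ≤ ε / (Q + 1) := by
        have := le_max_right (1/2 : ℝ) (1 - ε / (Q + 1))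
        linarith
      have : (1 - l) * Q ≤ ε / (Q + 1) * Q :=
        mul_le_mul_of_nonneg_right h1l hQ0
      have h2 : ε / (Q + 1) * Q ≤ ε := by
        rw [div_mul_eq_mul_div, div_le_iff₀ (by linarith : (0:ℝ) < Q + 1)]
        nlinarith
      linarith
    linarith
  constructor
  · rw [hΔ]; linarith
  · have : γ - 1 ≤ 0 := by linarith
    exact mul_nonpos_of_nonpos_of_nonneg this hQ0
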